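/- Let S ⊆ Z_p be a finite set and α, β ∈ Z_p with α ∉ S. Then there is a pReLU-network of width 2 computing a function f : Z_p → Z_p such that f(α) = β and f(x) = x for all x ∈ S. -/

import Mathlib

open scoped Classical

noncomputable def pReLU (p : ℕ) [Fact p.Prime] (x : ℚ_[p]) : ℚ_[p] :=
  if ‖x‖ ≤ 1 then x else 0

/-- A `pReLU`-network of width `w`, input dimension `a`, output dimension `b`:
an alternating composition of affine maps (hidden dimensions `≤ w`) and
coordinatewise `pReLU` activations, starting and ending with an affine map. -/
inductive IsPReLUNet (p : ℕ) [Fact p.Prime] (w : ℕ) : (a b : ℕ) →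
    ((Fin a → ℚ_[p]) → (Fin b → ℚ_[p])) → Prop
  | affine (a b : ℕ) (A : Matrix (Fin b) (Fin a) ℚ_[p]) (c : Fin b → ℚ_[p]) :
      IsPReLUNet p w a b (fun x => A.mulVec x + c)
  | step (a b c : ℕ) (hb : b ≤ w) (f : (Fin a → ℚ_[p]) → (Fin b → ℚ_[p]))
      (A : Matrix (Fin c) (Fin b) ℚ_[p]) (d : Fin c → ℚ_[p])
      (hf : IsPReLUNet p w a b f) :
      IsPReLUNet p w a c (fun x => A.mulVec (fun i => pReLU p (f x i)) + d)
theorem interpolate_one_point (p : ℕ) [Fact p.Prime]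
    (S : Finset ℤ_[p]) (α β : ℤ_[p]) (hα : α ∉ S) :
    ∃ (f : ℤ_[p] → ℤ_[p]) (F : (Fin 1 → ℚ_[p]) → (Fin 1 → ℚ_[p])),
      IsPReLUNet p 2 1 1 F ∧
      (∀ x : ℤ_[p], F (fun _ => (x : ℚ_[p])) = fun _ => (f x : ℚ_[p])) ∧
      f α = β ∧ ∀ x ∈ S, f x = x := by
  have hp1 : (1 : ℝ) < p := by exact_mod_cast (Fact.out : p.Prime).one_lt
  set k : ℕ := S.sup (fun s => (s - α).valuation) + 1 with hk
  -- the key expression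
  set e : ℤ_[p] → ℚ_[p] :=
    fun x => (p : ℚ_[p]) ^ (-(k : ℤ)) * (x : ℚ_[p]) +
      (1 - (α : ℚ_[p]) * (p : ℚ_[p]) ^ (-(k : ℤ))) with he
  have he' : ∀ x : ℤ_[p], e x = ((x : ℚ_[p]) - α) * (p : ℚ_[p]) ^ (-(k : ℤ)) + 1 := by
    intro x; rw [he]; ring
  -- norm > 1 on S
  have hS : ∀ s ∈ S, ¬ ‖e s‖ ≤ 1 := by
    intro s hs hle
    have hne : s - α ≠ 0 := sub_ne_zero.2 (fun h => hα (h ▸ hs))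
    have hv : (s - α).valuation < (k : ℤ) := by
      have h0 : 0 ≤ (s - α).valuation := Nat.zero_le _
      have h2 := Finset.le_sup (f := fun s => (s - α).valuation) hs
      exact_mod_cast Nat.lt_succ_of_le h2
    have hnorm : ‖((s : ℚ_[p]) - α) * (p : ℚ_[p]) ^ (-(k : ℤ))‖
        = (p : ℝ) ^ ((k : ℤ) - (s - α).valuation) := by
      rw [norm_mul, Padic.norm_p_zpow, neg_neg]
      have : ((s : ℚ_[p]) - α) = ((s - α : ℤ_[p]) : ℚ_[p]) := by push_cast; ring
      rw [this, PadicInt.padic_norm_e_of_padicInt, PadicInt.norm_eq_zpow_neg_valuation hne,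
        ← zpow_add₀ (by positivity : (p:ℝ) ≠ 0), neg_add_eq_sub]
    have hbig : 1 < ‖((s : ℚ_[p]) - α) * (p : ℚ_[p]) ^ (-(k : ℤ))‖ := by
      rw [hnorm]
      exact one_lt_zpow₀ hp1 (by omega)
    have := Padic.nonarchimedean (e s) (-1 : ℚ_[p])
    rw [he' s] at this
    simp only [add_neg_cancel_right, norm_neg, norm_one] at this
    have : ‖((s : ℚ_[p]) - α) * (p : ℚ_[p]) ^ (-(k : ℤ))‖ ≤ 1 := this.trans (by
      rw [he' s] at hle; exact max_le hle le_rfl)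
    linarith
  -- the function f
  set t : ℤ_[p] → ℤ_[p] := fun x => if h : ‖e x‖ ≤ 1 then ⟨e x, h⟩ else 0 with ht
  have htc : ∀ x : ℤ_[p], ((t x : ℤ_[p]) : ℚ_[p]) = pReLU p (e x) := by
    intro x
    rw [ht, pReLU]
    by_cases h : ‖e x‖ ≤ 1
    · simp only [dif_pos h, if_pos h]; exact congrArg Subtype.val (dif_pos h)
    · simp only [dif_neg h, if_neg h]; simp; exact dif_neg h
  refine ⟨fun x => x + (β - α) * t x,
    fun x => (Matrix.of ![![(1:ℚ_[p]), (β : ℚ_[p]) - α]]).mulVec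
      (fun i => pReLU p (((Matrix.of ![![(1:ℚ_[p])], ![(p : ℚ_[p]) ^ (-(k : ℤ))]]).mulVec x
        + ![0, 1 - (α : ℚ_[p]) * (p : ℚ_[p]) ^ (-(k : ℤ))]) i)) + ![0],
    ?_, ?_, ?_, ?_⟩
  · exact IsPReLUNet.step 1 2 1 le_rfl _ _ _ (IsPReLUNet.affine 1 2 _ _)
  · intro x
    funext i
    have h1 : pReLU p (x : ℚ_[p]) = (x : ℚ_[p]) := by
      rw [pReLU, if_pos]; rw [PadicInt.padic_norm_e_of_padicInt]; exact x.2
    simp only [Matrix.mulVec, dotProduct, Fin.sum_univ_two, Fin.sum_univ_one,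
      Matrix.of_apply, Matrix.cons_val', Matrix.cons_val_zero, Matrix.cons_val_one,
      Matrix.head_cons, Matrix.empty_val', Matrix.cons_val_fin_one, Matrix.head_fin_const,
      Pi.add_apply, Fin.isValue]
    have harg1 : (1 : ℚ_[p]) * (x : ℚ_[p]) + 0 = (x : ℚ_[p]) := by ring
    have harg2 : (p : ℚ_[p]) ^ (-(k : ℤ)) * (x : ℚ_[p])
        + (1 - (α : ℚ_[p]) * (p : ℚ_[p]) ^ (-(k : ℤ))) = e x := by rw [he]
    rw [harg1, harg2, h1]
    push_cast [htc x]
    ring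
  · have hα1 : e α = 1 := by rw [he' α]; ring
    have h1 : ‖e α‖ ≤ 1 := by rw [hα1, norm_one]
    have ht1 : t α = 1 := by
      rw [ht]; simp only; refine (dif_pos h1).trans ?_; exact Subtype.ext (by simpa using hα1)
    show α + (β - α) * t α = β
    rw [ht1]; ring
  · intro s hs
    have ht0 : t s = 0 := by rw [ht]; simp only; exact dif_neg (hS s hs)
    show s + (β - α) * t s = s
    rw [ht0]; ring
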